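/- Let F be a family of subsets of the universe U = {1,...,n} and consider the digraph D with vertices {s, t} ∪ {u_j : j ∈ U} ∪ {v_i : S_i ∈ F}, arcs (s, v_i) for all i, arcs (v_i, u_j) whenever j ∈ S_i, arcs (u_j, t) for all j, and the arc (t, s). If F' ⊆ F is a set cover of U of size k, then D contains a subset of arcs of size k + 2n + 1 such that every pair of vertices from {u_1,...,u_n} is connected by directed paths (in both directions) using only these arcs. -/

import Mathlib

/-- Vertices of the digraph built from a Set Cover instance: a source `s`, a sink `t`,
element vertices `u j`, and set vertices `v i`. -/
inductive SCV (n m : ℕ) : Type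
  | s : SCV n m
  | t : SCV n m
  | u : Fin n → SCV n m
  | v : Fin m → SCV n m
deriving DecidableEq

/-- Arcs of the constructed digraph: `(s, v i)` for all `i`, `(v i, u j)` whenever
`j ∈ Sets i`, `(u j, t)` for all `j`, and `(t, s)`. -/
def Darc {n m : ℕ} (Sets : Fin m → Finset (Fin n)) : SCV n m → SCV n m → Prop :=
  fun x y => match x, y with
  | .s, .v _ => True
  | .v i, .u j => j ∈ Sets i
  | .u _, .t => True
  | .t, .s => True
  | _, _ => False

/-- If `F'` is a set cover of size `k`, then the constructed digraph contains an arc set of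
size `k + 2n + 1` strongly connecting all element vertices `u j` to each other. -/
theorem stmt_13 {n m : ℕ} (Sets : Fin m → Finset (Fin n)) (F' : Finset (Fin m)) (k : ℕ)
    (hcover : ∀ j : Fin n, ∃ i ∈ F', j ∈ Sets i) (hk : F'.card = k) :
    ∃ A' : Finset (SCV n m × SCV n m),
      A'.card = k + 2 * n + 1 ∧
      (∀ e ∈ A', Darc Sets e.1 e.2) ∧
      ∀ j j' : Fin n,
        Relation.ReflTransGen (fun x y => (x, y) ∈ A') (SCV.u j) (SCV.u j') := by
  choose f hfF hfS using hcover
  set A1 : Finset (SCV n m × SCV n m) := F'.image (fun i => (SCV.s, SCV.v i)) with hA1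
  set A2 : Finset (SCV n m × SCV n m) :=
    Finset.univ.image (fun j : Fin n => (SCV.v (f j), SCV.u j)) with hA2
  set A3 : Finset (SCV n m × SCV n m) :=
    Finset.univ.image (fun j : Fin n => (SCV.u j, SCV.t)) with hA3
  set A4 : Finset (SCV n m × SCV n m) := {(SCV.t, SCV.s)} with hA4
  refine ⟨A1 ∪ A2 ∪ A3 ∪ A4, ?_, ?_, ?_⟩
  · have h1 : A1.card = k := by
      rw [hA1, Finset.card_image_of_injective _ (by intro a b h; simpa using h), hk]
    have h2 : A2.card = n := by
      rw [hA2, Finset.card_image_of_injective _ (fun a b h => by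
        simp only [Prod.mk.injEq, SCV.v.injEq, SCV.u.injEq] at h; exact h.2)]
      simp
    have h3 : A3.card = n := by
      rw [hA3, Finset.card_image_of_injective _ (by intro a b h; simpa using h)]
      simp
    have d12 : Disjoint A1 A2 := by
      rw [Finset.disjoint_left]
      rintro ⟨x, y⟩ hx hy
      simp only [hA1, hA2, Finset.mem_image, Prod.mk.injEq] at hx hy
      obtain ⟨i, -, hi1, -⟩ := hx
      obtain ⟨j, -, hj1, -⟩ := hy
      rw [← hi1] at hj1; exact nomatch hj1
    have d123 : Disjoint (A1 ∪ A2) A3 := by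
      rw [Finset.disjoint_left]
      rintro ⟨x, y⟩ hx hy
      simp only [hA1, hA2, hA3, Finset.mem_union, Finset.mem_image, Prod.mk.injEq] at hx hy
      obtain ⟨j, -, -, hj2⟩ := hy
      rcases hx with ⟨i, -, -, h⟩ | ⟨i, -, -, h⟩ <;> rw [← h] at hj2 <;> exact nomatch hj2
    have d4 : Disjoint (A1 ∪ A2 ∪ A3) A4 := by
      rw [Finset.disjoint_left]
      rintro ⟨x, y⟩ hx hy
      simp only [hA1, hA2, hA3, hA4, Finset.mem_union, Finset.mem_image, Finset.mem_singleton,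
        Prod.mk.injEq] at hx hy
      rcases hx with (⟨i, -, h, -⟩ | ⟨i, -, h, -⟩) | ⟨i, -, h, -⟩ <;>
        rw [← h] at hy <;> exact nomatch hy.1
    rw [Finset.card_union_of_disjoint d4, Finset.card_union_of_disjoint d123,
      Finset.card_union_of_disjoint d12, h1, h2, h3, hA4]
    simp; ring
  · rintro ⟨x, y⟩ he
    simp only [hA1, hA2, hA3, hA4, Finset.mem_union, Finset.mem_image, Finset.mem_singleton,
      Prod.mk.injEq] at he
    rcases he with ((⟨i, -, h1, h2⟩ | ⟨j, -, h1, h2⟩) | ⟨j, -, h1, h2⟩) | ⟨h1, h2⟩ <;>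
      subst h1 <;> subst h2 <;> simp only [Darc] <;> try trivial
    exact hfS j
  · intro j j'
    have s1 : ((SCV.u j : SCV n m), SCV.t) ∈ A1 ∪ A2 ∪ A3 ∪ A4 := by
      simp [hA3]
    have s2 : ((SCV.t : SCV n m), SCV.s) ∈ A1 ∪ A2 ∪ A3 ∪ A4 := by
      simp [hA4]
    have s3 : ((SCV.s : SCV n m), SCV.v (f j')) ∈ A1 ∪ A2 ∪ A3 ∪ A4 := by
      simp only [Finset.mem_union, hA1, Finset.mem_image]
      exact Or.inl (Or.inl (Or.inl ⟨f j', hfF j', rfl⟩))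
    have s4 : ((SCV.v (f j') : SCV n m), SCV.u j') ∈ A1 ∪ A2 ∪ A3 ∪ A4 := by
      simp [hA2]
    exact .tail (.tail (.tail (.tail .refl s1) s2) s3) s4
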